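/- Suppose A_c := A − BK is Schur-stable and the terminal weight P ∈ ℝ^{n×n} satisfies the Lyapunov equation A_cᵀ P A_c + Q_c = P. Then for every horizon N ≥ 1 the condensed Hessian H_N is block Toeplitz: for all 0 ≤ j, k ≤ N−1, the (j,k) block satisfies (H_N)_{j,k} = T_{j−k}. In particular the blocks depend only on the difference j − k. -/

import Mathlib

open Matrix Filter
open scoped Kronecker

/-- `A` is Schur-stable: every complex eigenvalue has modulus `< 1`. -/
def SchurStable {n : ℕ} (A : Matrix (Fin n) (Fin n) ℝ) : Prop :=
  ∀ μ ∈ spectrum ℂ (A.map Complex.ofReal), ‖μ‖ < 1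

/-- The `d`-th block of the infinite block-Toeplitz matrix associated with the
condensed Hessian. -/
noncomputable def Tblk {n m : ℕ} (Ac : Matrix (Fin n) (Fin n) ℝ)
    (B : Matrix (Fin n) (Fin m) ℝ) (Qc : Matrix (Fin n) (Fin n) ℝ)
    (R : Matrix (Fin m) (Fin m) ℝ) (d : ℤ) : Matrix (Fin m) (Fin m) ℝ :=
  if 0 ≤ d then
    (∑' i : ℕ, Bᵀ * (Acᵀ) ^ i * Qc * Ac ^ (i + d.toNat) * B) + (if d = 0 then R else 0)
  else
    ((∑' i : ℕ, Bᵀ * (Acᵀ) ^ i * Qc * Ac ^ (i + (-d).toNat) * B))ᵀ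

/-- The `(j,k)` block (for `j ≥ k`) of the condensed Hessian with horizon `N`. -/
noncomputable def Hge {n m : ℕ} (Ac : Matrix (Fin n) (Fin n) ℝ)
    (B : Matrix (Fin n) (Fin m) ℝ) (Qc P : Matrix (Fin n) (Fin n) ℝ)
    (R : Matrix (Fin m) (Fin m) ℝ) (N j k : ℕ) : Matrix (Fin m) (Fin m) ℝ :=
  (∑ i ∈ Finset.range (N - j), Bᵀ * (Acᵀ) ^ i * Qc * Ac ^ (i + j - k) * B)
    + Bᵀ * (Acᵀ) ^ (N - j) * P * Ac ^ (N - k) * B + (if j = k then R else 0)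

/-- The condensed Hessian with horizon `N`, as an `Nm × Nm` real matrix. -/
noncomputable def Hmat {n m : ℕ} (Ac : Matrix (Fin n) (Fin n) ℝ)
    (B : Matrix (Fin n) (Fin m) ℝ) (Qc P : Matrix (Fin n) (Fin n) ℝ)
    (R : Matrix (Fin m) (Fin m) ℝ) (N : ℕ) :
    Matrix (Fin N × Fin m) (Fin N × Fin m) ℝ :=
  Matrix.of fun p q =>
    if (q.1 : ℕ) ≤ (p.1 : ℕ) then Hge Ac B Qc P R N p.1 q.1 p.2 q.2
    else (Hge Ac B Qc P R N q.1 p.1)ᵀ p.2 q.2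

/-- The matrix symbol of the condensed Hessian. -/
noncomputable def symb {n m : ℕ} (Ac : Matrix (Fin n) (Fin n) ℝ)
    (B : Matrix (Fin n) (Fin m) ℝ) (Qc : Matrix (Fin n) (Fin n) ℝ)
    (R : Matrix (Fin m) (Fin m) ℝ) (z : ℂ) : Matrix (Fin m) (Fin m) ℂ :=
  (z • ((z • (1 : Matrix (Fin n) (Fin n) ℂ) - Ac.map Complex.ofReal)⁻¹
      * B.map Complex.ofReal))ᴴ
    * Qc.map Complex.ofReal
    * (z • ((z • (1 : Matrix (Fin n) (Fin n) ℂ) - Ac.map Complex.ofReal)⁻¹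
      * B.map Complex.ofReal))
  + R.map Complex.ofReal

open scoped NNReal ENNReal

section
attribute [local instance] Matrix.linftyOpNormedAddCommGroup Matrix.linftyOpNormedRing
  Matrix.linftyOpNormedAlgebra Matrix.linftyOpNormedSpace

lemma entry_nnnorm_le {n m : ℕ} (M : Matrix (Fin n) (Fin m) ℝ) (i : Fin n) (j : Fin m) :
    ‖M i j‖₊ ≤ ‖M‖₊ := by
  rw [Matrix.linfty_opNNNorm_def]
  refine le_trans ?_ (Finset.le_sup (f := fun i => ∑ j, ‖M i j‖₊) (Finset.mem_univ i))
  exact Finset.single_le_sum (f := fun j => ‖M i j‖₊) (fun _ _ => zero_le) (Finset.mem_univ j)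

lemma transpose_nnnorm_le {n : ℕ} (M : Matrix (Fin n) (Fin n) ℝ) :
    ‖Mᵀ‖₊ ≤ (n : ℝ≥0) * ‖M‖₊ := by
  rw [Matrix.linfty_opNNNorm_def]
  refine Finset.sup_le fun j _ => ?_
  calc ∑ i, ‖Mᵀ j i‖₊ ≤ ∑ _i : Fin n, ‖M‖₊ :=
        Finset.sum_le_sum fun i _ => entry_nnnorm_le M i j
    _ = (n : ℝ≥0) * ‖M‖₊ := by simp [Finset.sum_const, nsmul_eq_mul]

lemma five_bound {n m : ℕ} (B1 : Matrix (Fin m) (Fin n) ℝ) (X Q Y : Matrix (Fin n) (Fin n) ℝ)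
    (B2 : Matrix (Fin n) (Fin m) ℝ) :
    ‖B1 * X * Q * Y * B2‖₊ ≤ ‖B1‖₊ * ‖X‖₊ * ‖Q‖₊ * ‖Y‖₊ * ‖B2‖₊ := by
  calc ‖B1 * X * Q * Y * B2‖₊ ≤ ‖B1 * X * Q * Y‖₊ * ‖B2‖₊ := Matrix.linfty_opNNNorm_mul _ _
    _ ≤ ‖B1 * X * Q‖₊ * ‖Y‖₊ * ‖B2‖₊ :=
        mul_le_mul_left (Matrix.linfty_opNNNorm_mul _ _) _
    _ ≤ ‖B1 * X‖₊ * ‖Q‖₊ * ‖Y‖₊ * ‖B2‖₊ :=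
        mul_le_mul_left (mul_le_mul_left (Matrix.linfty_opNNNorm_mul _ _) _) _
    _ ≤ ‖B1‖₊ * ‖X‖₊ * ‖Q‖₊ * ‖Y‖₊ * ‖B2‖₊ :=
        mul_le_mul_left (mul_le_mul_left (mul_le_mul_left
          (Matrix.linfty_opNNNorm_mul _ _) _) _) _
end

section
attribute [local instance] Matrix.linftyOpNormedAddCommGroup Matrix.linftyOpNormedRing
  Matrix.linftyOpNormedAlgebra Matrix.linftyOpNormedSpace

variable {n m : ℕ}

lemma nnnorm_map_ofReal' {n : ℕ} (M : Matrix (Fin n) (Fin n) ℝ) :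
    ‖M.map Complex.ofReal‖₊ = ‖M‖₊ := by
  simp [Matrix.linfty_opNNNorm_def, Matrix.map_apply]

lemma schur_geo {n : ℕ} (hn : 0 < n) {Ac : Matrix (Fin n) (Fin n) ℝ}
    (h : SchurStable Ac) :
    ∃ C ρ : ℝ≥0, 0 < ρ ∧ ρ < 1 ∧ ∀ i : ℕ, ‖Ac ^ i‖₊ ≤ C * ρ ^ i := by
  haveI : Nonempty (Fin n) := Fin.pos_iff_nonempty.mp hn
  set Az := Ac.map Complex.ofReal with hAz
  have hr : spectralRadius ℂ Az < 1 := by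
    have := spectrum.spectralRadius_lt_of_forall_lt (A := Matrix (Fin n) (Fin n) ℂ)
      (a := Az) (r := 1) (fun z hz => by simpa [← NNReal.coe_lt_coe] using h z hz)
    simpa using this
  obtain ⟨ρ, hρr, hρ1⟩ := ENNReal.lt_iff_exists_nnreal_btwn.mp hr
  have hρ1' : ρ < 1 := by exact_mod_cast hρ1
  have hρ0 : 0 < ρ := by
    have h0 : (0:ℝ≥0∞) < (ρ:ℝ≥0∞) := (zero_le).trans_lt hρr
    exact_mod_cast h0
  have hg := spectrum.pow_nnnorm_pow_one_div_tendsto_nhds_spectralRadius Az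
  have hev : ∀ᶠ N : ℕ in atTop, (‖Az ^ N‖₊ : ℝ≥0∞) ^ (1 / (N:ℝ)) < (ρ : ℝ≥0∞) :=
    hg.eventually_lt_const hρr
  obtain ⟨N0, hN0⟩ := (hev.and (eventually_ge_atTop 1)).exists_forall_of_atTop
  -- for N ≥ N0 : ‖Az^N‖₊ ≤ ρ^N
  have key : ∀ N ≥ N0, ‖Ac ^ N‖₊ ≤ ρ ^ N := by
    intro N hN
    obtain ⟨hlt, hN1⟩ := hN0 N hN
    have hNne : (N:ℝ) ≠ 0 := by positivity
    have h2 : (‖Az ^ N‖₊ : ℝ≥0∞) ≤ ((ρ:ℝ≥0∞)) ^ (N:ℝ) := by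
      calc (‖Az ^ N‖₊ : ℝ≥0∞) = ((‖Az ^ N‖₊ : ℝ≥0∞) ^ (1 / (N:ℝ))) ^ (N:ℝ) := by
            rw [← ENNReal.rpow_mul, one_div, inv_mul_cancel₀ hNne, ENNReal.rpow_one]
        _ ≤ _ := ENNReal.rpow_le_rpow hlt.le (by positivity)
    rw [ENNReal.rpow_natCast, ← ENNReal.coe_pow, ENNReal.coe_le_coe] at h2
    have : ‖Ac ^ N‖₊ = ‖Az ^ N‖₊ := by
      have hfn : ⇑Complex.ofRealHom = Complex.ofReal := rfl
      rw [hAz, ← hfn, ← RingHom.mapMatrix_apply (Complex.ofRealHom), ← map_pow,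
        RingHom.mapMatrix_apply, hfn, nnnorm_map_ofReal']
    rw [this]; exact h2
  refine ⟨((Finset.range (N0+1)).sup fun i => ‖Ac ^ i‖₊ / ρ ^ i) ⊔ 1, ρ, hρ0, hρ1', ?_⟩
  intro i
  rcases le_or_gt N0 i with hi | hi
  · calc ‖Ac ^ i‖₊ ≤ ρ ^ i := key i hi
      _ ≤ _ := by
        nth_rewrite 1 [← one_mul (ρ ^ i)]
        exact mul_le_mul_left (le_sup_right) _
  · have hmem : i ∈ Finset.range (N0+1) := Finset.mem_range.mpr (by omega)
    have hle : ‖Ac ^ i‖₊ / ρ ^ i ≤ (Finset.range (N0+1)).sup fun i => ‖Ac ^ i‖₊ / ρ ^ i :=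
      Finset.le_sup (f := fun i => ‖Ac ^ i‖₊ / ρ ^ i) hmem
    have : ‖Ac ^ i‖₊ = (‖Ac ^ i‖₊ / ρ ^ i) * ρ ^ i := by
      rw [div_mul_cancel₀]; exact pow_ne_zero _ hρ0.ne'
    rw [this]
    exact mul_le_mul_left (hle.trans le_sup_left) _

lemma geo_all {Ac : Matrix (Fin n) (Fin n) ℝ} (hn : 0 < n) (h : SchurStable Ac) :
    ∃ C ρ : ℝ≥0, 0 < ρ ∧ ρ < 1 ∧ (∀ i : ℕ, ‖Ac ^ i‖₊ ≤ C * ρ ^ i) ∧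
      (∀ i : ℕ, ‖(Acᵀ) ^ i‖₊ ≤ (n : ℝ≥0) * C * ρ ^ i) := by
  obtain ⟨C, ρ, h0, h1, hb⟩ := schur_geo hn h
  refine ⟨C, ρ, h0, h1, hb, fun i => ?_⟩
  rw [← Matrix.transpose_pow]
  calc ‖(Ac ^ i)ᵀ‖₊ ≤ (n : ℝ≥0) * ‖Ac ^ i‖₊ := transpose_nnnorm_le _
    _ ≤ (n : ℝ≥0) * (C * ρ ^ i) := mul_le_mul_right (hb i) _
    _ = (n : ℝ≥0) * C * ρ ^ i := by ring

lemma summable_g {Ac Qc : Matrix (Fin n) (Fin n) ℝ} (B : Matrix (Fin n) (Fin m) ℝ)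
    (hn : 0 < n) (h : SchurStable Ac) (d : ℕ) :
    Summable (fun i : ℕ => Bᵀ * (Acᵀ) ^ i * Qc * Ac ^ (i + d) * B) := by
  obtain ⟨C, ρ, h0, h1, hb, hbt⟩ := geo_all hn h
  refine Summable.of_nnnorm_bounded
    (g := fun i => (‖Bᵀ‖₊ * ((n:ℝ≥0) * C) * ‖Qc‖₊ * C * ‖B‖₊) * ρ ^ i)
    (Summable.mul_left _ (NNReal.summable_geometric h1)) fun i => ?_
  calc ‖Bᵀ * (Acᵀ) ^ i * Qc * Ac ^ (i + d) * B‖₊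
      ≤ ‖Bᵀ‖₊ * ‖(Acᵀ) ^ i‖₊ * ‖Qc‖₊ * ‖Ac ^ (i + d)‖₊ * ‖B‖₊ := five_bound _ _ _ _ _
    _ ≤ ‖Bᵀ‖₊ * ((n:ℝ≥0) * C * ρ ^ i) * ‖Qc‖₊ * (C * ρ ^ (i + d)) * ‖B‖₊ := by
        gcongr <;> [exact hbt i; exact hb (i + d)]
    _ ≤ ‖Bᵀ‖₊ * ((n:ℝ≥0) * C * ρ ^ i) * ‖Qc‖₊ * (C * 1) * ‖B‖₊ := by
        gcongr
        exact pow_le_one₀ zero_le h1.le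
    _ = (‖Bᵀ‖₊ * ((n:ℝ≥0) * C) * ‖Qc‖₊ * C * ‖B‖₊) * ρ ^ i := by ring

lemma P_repr {Ac Qc P : Matrix (Fin n) (Fin n) ℝ} (hlyap : Acᵀ * P * Ac + Qc = P) :
    ∀ M : ℕ, P = (∑ i ∈ Finset.range M, (Acᵀ) ^ i * Qc * Ac ^ i) + (Acᵀ) ^ M * P * Ac ^ M := by
  intro M
  induction M with
  | zero => simp
  | succ M ih =>
    rw [Finset.sum_range_succ]
    calc P = (∑ i ∈ Finset.range M, (Acᵀ) ^ i * Qc * Ac ^ i) + (Acᵀ) ^ M * P * Ac ^ M := ih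
      _ = (∑ i ∈ Finset.range M, (Acᵀ) ^ i * Qc * Ac ^ i)
            + (Acᵀ) ^ M * (Acᵀ * P * Ac + Qc) * Ac ^ M := by rw [hlyap]
      _ = _ := by
        rw [pow_succ, pow_succ,
          show Ac ^ M * Ac = Ac * Ac ^ M from ((Commute.refl Ac).pow_left M).eq]
        noncomm_ring

set_option maxHeartbeats 1000000 in
lemma tail_hasSum {Ac Qc P : Matrix (Fin n) (Fin n) ℝ} (B : Matrix (Fin n) (Fin m) ℝ)
    (hn : 0 < n) (h : SchurStable Ac) (hlyap : Acᵀ * P * Ac + Qc = P) (a d : ℕ) :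
    HasSum (fun i : ℕ => Bᵀ * (Acᵀ) ^ (a + i) * Qc * Ac ^ (a + i + d) * B)
      (Bᵀ * (Acᵀ) ^ a * P * Ac ^ (a + d) * B) := by
  obtain ⟨C, ρ, h0, h1, hb, hbt⟩ := geo_all hn h
  -- summability of the tail
  have hsum : Summable (fun i : ℕ => Bᵀ * (Acᵀ) ^ (a + i) * Qc * Ac ^ (a + i + d) * B) := by
    have := (summable_nat_add_iff (f := fun i : ℕ => Bᵀ * (Acᵀ) ^ i * Qc * Ac ^ (i + d) * B) a).mpr
      (summable_g B hn h d)
    refine this.congr fun i => ?_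
    simp only [add_comm i a]
  -- the remainder tends to zero
  have hrem : Tendsto (fun M : ℕ => Bᵀ * (Acᵀ) ^ (a + M) * P * Ac ^ (a + M + d) * B)
      atTop (nhds 0) := by
    refine squeeze_zero_norm (a := fun M => ((‖Bᵀ‖₊ * ((n:ℝ≥0) * C) * ‖P‖₊ * C * ‖B‖₊ : ℝ≥0) : ℝ)
      * (ρ : ℝ) ^ M) (fun M => ?_) ?_
    · have hnn : ‖Bᵀ * (Acᵀ) ^ (a + M) * P * Ac ^ (a + M + d) * B‖₊
          ≤ (‖Bᵀ‖₊ * ((n:ℝ≥0) * C) * ‖P‖₊ * C * ‖B‖₊) * ρ ^ M := by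
        calc ‖Bᵀ * (Acᵀ) ^ (a + M) * P * Ac ^ (a + M + d) * B‖₊
            ≤ ‖Bᵀ‖₊ * ‖(Acᵀ) ^ (a + M)‖₊ * ‖P‖₊ * ‖Ac ^ (a + M + d)‖₊ * ‖B‖₊ :=
              five_bound _ _ _ _ _
          _ ≤ ‖Bᵀ‖₊ * ((n:ℝ≥0) * C * ρ ^ (a + M)) * ‖P‖₊ * (C * ρ ^ (a + M + d)) * ‖B‖₊ := by
              gcongr <;> [exact hbt _; exact hb _]
          _ = ‖Bᵀ‖₊ * ((n:ℝ≥0) * C * (ρ ^ a * ρ ^ M)) * ‖P‖₊ * (C * ρ ^ (a + M + d)) * ‖B‖₊ := by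
              rw [pow_add]
          _ ≤ ‖Bᵀ‖₊ * ((n:ℝ≥0) * C * (1 * ρ ^ M)) * ‖P‖₊ * (C * 1) * ‖B‖₊ := by
              gcongr
              · exact pow_le_one₀ zero_le h1.le
              · exact pow_le_one₀ zero_le h1.le
          _ = (‖Bᵀ‖₊ * ((n:ℝ≥0) * C) * ‖P‖₊ * C * ‖B‖₊) * ρ ^ M := by ring
      calc ‖Bᵀ * (Acᵀ) ^ (a + M) * P * Ac ^ (a + M + d) * B‖
          ≤ ((‖Bᵀ‖₊ * ((n:ℝ≥0) * C) * ‖P‖₊ * C * ‖B‖₊ : ℝ≥0) : ℝ) * ((ρ ^ M : ℝ≥0) : ℝ) := by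
            exact_mod_cast hnn
        _ = _ := by push_cast; ring
    · have : Tendsto (fun M : ℕ => (ρ : ℝ) ^ M) atTop (nhds 0) :=
        tendsto_pow_atTop_nhds_zero_of_lt_one ρ.coe_nonneg (by exact_mod_cast h1)
      simpa using this.const_mul _
  -- partial sums equal target minus remainder
  have hps : ∀ M : ℕ, (∑ i ∈ Finset.range M, Bᵀ * (Acᵀ) ^ (a + i) * Qc * Ac ^ (a + i + d) * B)
      = Bᵀ * (Acᵀ) ^ a * P * Ac ^ (a + d) * B
        - Bᵀ * (Acᵀ) ^ (a + M) * P * Ac ^ (a + M + d) * B := by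
    intro M
    have hPM := P_repr hlyap M
    have key : Bᵀ * (Acᵀ) ^ a * P * Ac ^ (a + d) * B
        = (∑ i ∈ Finset.range M, Bᵀ * (Acᵀ) ^ (a + i) * Qc * Ac ^ (a + i + d) * B)
          + Bᵀ * (Acᵀ) ^ (a + M) * P * Ac ^ (a + M + d) * B := by
      conv_lhs => rw [hPM]
      rw [Matrix.mul_add, Matrix.add_mul, Matrix.add_mul]
      congr 1
      · rw [Matrix.mul_sum, Matrix.sum_mul, Matrix.sum_mul]
        refine Finset.sum_congr rfl fun i _ => ?_
        rw [pow_add (Acᵀ) a i, show a + i + d = i + (a + d) by omega, pow_add Ac i (a + d)]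
        simp only [Matrix.mul_assoc]
      · rw [pow_add (Acᵀ) a M, show a + M + d = M + (a + d) by omega, pow_add Ac M (a + d)]
        simp only [Matrix.mul_assoc]
    rw [key]; abel
  -- conclude
  have htendsto : Tendsto (fun M : ℕ =>
      ∑ i ∈ Finset.range M, Bᵀ * (Acᵀ) ^ (a + i) * Qc * Ac ^ (a + i + d) * B)
      atTop (nhds (Bᵀ * (Acᵀ) ^ a * P * Ac ^ (a + d) * B)) := by
    simp only [hps]
    simpa using tendsto_const_nhds.sub hrem
  have h2 := hsum.hasSum
  have := h2.tendsto_sum_nat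
  have huniq := tendsto_nhds_unique this htendsto
  rwa [huniq] at h2

end

section
attribute [local instance] Matrix.linftyOpNormedAddCommGroup Matrix.linftyOpNormedRing
  Matrix.linftyOpNormedAlgebra Matrix.linftyOpNormedSpace

set_option maxHeartbeats 1000000 in
lemma Hge_eq {n m : ℕ} {Ac Qc P : Matrix (Fin n) (Fin n) ℝ} (B : Matrix (Fin n) (Fin m) ℝ)
    (R : Matrix (Fin m) (Fin m) ℝ)
    (hn : 0 < n) (hstab : SchurStable Ac) (hlyap : Acᵀ * P * Ac + Qc = P)
    (N j k : ℕ) (hk : k ≤ j) (hj : j < N) :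
    Hge Ac B Qc P R N j k
      = (∑' i : ℕ, Bᵀ * (Acᵀ) ^ i * Qc * Ac ^ (i + (j - k)) * B) + (if j = k then R else 0) := by
  unfold Hge
  congr 1
  set M := N - j with hM
  have hsml := summable_g (Qc := Qc) B hn hstab (j - k)
  have htail := tail_hasSum (Qc := Qc) (P := P) B hn hstab hlyap M (j - k)
  have htsum_tail :
      (∑' i : ℕ, Bᵀ * (Acᵀ) ^ (i + M) * Qc * Ac ^ ((i + M) + (j - k)) * B)
        = Bᵀ * (Acᵀ) ^ M * P * Ac ^ (M + (j - k)) * B := by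
    rw [← htail.tsum_eq]
    exact tsum_congr fun i => by rw [add_comm i M]
  calc (∑ i ∈ Finset.range M, Bᵀ * (Acᵀ) ^ i * Qc * Ac ^ (i + j - k) * B)
        + Bᵀ * (Acᵀ) ^ M * P * Ac ^ (N - k) * B
      = (∑ i ∈ Finset.range M, Bᵀ * (Acᵀ) ^ i * Qc * Ac ^ (i + (j - k)) * B)
        + ∑' i : ℕ, Bᵀ * (Acᵀ) ^ (i + M) * Qc * Ac ^ ((i + M) + (j - k)) * B := by
        congr 1
        · exact Finset.sum_congr rfl fun i _ => by rw [show i + j - k = i + (j - k) by omega]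
        · rw [htsum_tail, show N - k = M + (j - k) by omega]
    _ = ∑' i : ℕ, Bᵀ * (Acᵀ) ^ i * Qc * Ac ^ (i + (j - k)) * B :=
        Summable.sum_add_tsum_nat_add M hsml

end

/-- If `A - B*K` is Schur-stable and the terminal weight `P` solves the Lyapunov
equation `A_cᵀ P A_c + Q_c = P`, then the condensed Hessian is block Toeplitz:
each `(j,k)` block equals `T_{j-k}`. -/
theorem stmt9 {n m : ℕ} (hn : 0 < n) (hm : 0 < m)
    (A : Matrix (Fin n) (Fin n) ℝ) (B : Matrix (Fin n) (Fin m) ℝ)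
    (K : Matrix (Fin m) (Fin n) ℝ)
    (Q : Matrix (Fin n) (Fin n) ℝ) (R : Matrix (Fin m) (Fin m) ℝ)
    (hQ : Q.PosSemidef) (hR : R.PosDef)
    (hstab : SchurStable (A - B * K))
    (P : Matrix (Fin n) (Fin n) ℝ) (hP : P.IsSymm)
    (hlyap : (A - B * K)ᵀ * P * (A - B * K) + (Q + Kᵀ * R * K) = P) :
    ∀ N : ℕ, 1 ≤ N → ∀ j k : Fin N,
      (Matrix.of fun a b : Fin m =>
          Hmat (A - B * K) B (Q + Kᵀ * R * K) P R N (j, a) (k, b))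
        = Tblk (A - B * K) B (Q + Kᵀ * R * K) R ((j : ℤ) - (k : ℤ)) := by
  intro N hN j k
  rcases le_or_gt (k : ℕ) (j : ℕ) with hkj | hjk
  · have hof : (Matrix.of fun a b : Fin m =>
        Hmat (A - B * K) B (Q + Kᵀ * R * K) P R N (j, a) (k, b))
        = Hge (A - B * K) B (Q + Kᵀ * R * K) P R N j k := by
      ext a b
      simp only [Hmat, Matrix.of_apply]
      rw [if_pos hkj]
    rw [hof, Hge_eq B R hn hstab hlyap N j k hkj j.isLt]
    unfold Tblk
    rw [if_pos (by omega : (0:ℤ) ≤ (j : ℤ) - (k : ℤ))]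
    rw [show ((j : ℤ) - (k : ℤ)).toNat = (j : ℕ) - (k : ℕ) by omega]
    rw [if_congr (show ((j : ℤ) - (k : ℤ) = 0) ↔ ((j : ℕ) = (k : ℕ)) by omega) rfl rfl]
  · have hof : (Matrix.of fun a b : Fin m =>
        Hmat (A - B * K) B (Q + Kᵀ * R * K) P R N (j, a) (k, b))
        = (Hge (A - B * K) B (Q + Kᵀ * R * K) P R N k j)ᵀ := by
      ext a b
      simp only [Hmat, Matrix.of_apply]
      rw [if_neg (show ¬ ((k : ℕ) ≤ (j : ℕ)) by omega)]
    rw [hof, Hge_eq B R hn hstab hlyap N k j (by omega) k.isLt,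
      if_neg (show (k : ℕ) ≠ (j : ℕ) by omega), add_zero]
    unfold Tblk
    rw [if_neg (by omega : ¬ (0:ℤ) ≤ (j : ℤ) - (k : ℤ))]
    rw [show (-((j : ℤ) - (k : ℤ))).toNat = (k : ℕ) - (j : ℕ) by omega]
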